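/- Let R = Z[X] be the polynomial ring in the entries of an m×n matrix of indeterminates X (with 1 ≤ t ≤ min(m,n)), localized at x_{11}. Set y_{ij} = x_{ij} - x_{i1}x_{1j}/x_{11} for 2 ≤ i ≤ m, 2 ≤ j ≤ n, and let Y = (y_{ij}). Then the map Z[Y][x_{11},...,x_{m1}, x_{12},...,x_{1n}]_{x_{11}} → R_{x_{11}} sending the y_{ij} and the first-row/first-column variables to the corresponding elements is a ring isomorphism, and under it the ideal I_t(X)R_{x_{11}} of size-t minors of X equals the ideal I_{t-1}(Y)R_{x_{11}} of size-(t-1) minors of Y. -/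

import Mathlib

open MvPolynomial

noncomputable section Stmt18

namespace Stmt18

/-- The ideal generated by the size-`t` minors of a matrix `M`. -/
def minorsIdeal {S : Type*} [CommRing S] {α β : Type*} (t : ℕ) (M : Matrix α β S) :
    Ideal S :=
  Ideal.span { d | ∃ (r : Fin t → α) (c : Fin t → β),
    d = (Matrix.of fun a b => M (r a) (c b)).det }

/-- `R = ℤ[X]` for an `(m+1) × (n+1)` matrix of indeterminates `X`. -/
abbrev R (m n : ℕ) := MvPolynomial (Fin (m + 1) × Fin (n + 1)) ℤ

/-- The generic matrix `X = (x_{ij})`. -/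
def Xmat (m n : ℕ) : Matrix (Fin (m + 1)) (Fin (n + 1)) (R m n) := fun i j => X (i, j)

/-- `R_{x₁₁}`, the localization of `R` at the entry `x₁₁`. -/
abbrev Rloc (m n : ℕ) := Localization.Away (X (0, 0) : R m n)

/-- `1/x₁₁` in `R_{x₁₁}`. -/
def xinv (m n : ℕ) : Rloc m n := IsLocalization.Away.invSelf (X (0, 0) : R m n)

/-- The `m × n` matrix `Y` with entries `y_{ij} = x_{ij} - x_{i1}x_{1j}/x_{11}` in
`R_{x₁₁}` (rows and columns of `X` indexed from `0`, so `y_{ij}` uses rows/columns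
`i+1`, `j+1`). -/
def Ymat (m n : ℕ) : Matrix (Fin m) (Fin n) (Rloc m n) := fun i j =>
  algebraMap (R m n) (Rloc m n) (X (i.succ, j.succ)) -
    algebraMap (R m n) (Rloc m n) (X (i.succ, 0)) *
      algebraMap (R m n) (Rloc m n) (X (0, j.succ)) * xinv m n

/-- Images of the generators of `ℤ[Y][x₁₁, …, x_{m1}, x₁₂, …, x₁ₙ]`: the variables
`y_{ij}` go to `x_{ij} - x_{i1}x_{1j}/x_{11}`, the first-column variables
`x_{11}, …, x_{m1}` and first-row variables `x_{12}, …, x_{1n}` go to themselves. -/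
def srcGen (m n : ℕ) : (Fin m × Fin n) ⊕ (Fin (m + 1) ⊕ Fin n) → Rloc m n
  | Sum.inl (i, j) => Ymat m n i j
  | Sum.inr (Sum.inl i) => algebraMap (R m n) (Rloc m n) (X (i, 0))
  | Sum.inr (Sum.inr j) => algebraMap (R m n) (Rloc m n) (X (0, j.succ))

/-- The homomorphism `ℤ[Y][x₁₁, …, x_{m1}, x₁₂, …, x₁ₙ] → R_{x₁₁}`. -/
def srcHom (m n : ℕ) :
    MvPolynomial ((Fin m × Fin n) ⊕ (Fin (m + 1) ⊕ Fin n)) ℤ →+* Rloc m n :=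
  (MvPolynomial.aeval (srcGen m n)).toRingHom

/-- The variable `x₁₁` of the source polynomial ring. -/
def x11src (m n : ℕ) : MvPolynomial ((Fin m × Fin n) ⊕ (Fin (m + 1) ⊕ Fin n)) ℤ :=
  X (Sum.inr (Sum.inl 0))

lemma srcHom_x11_isUnit (m n : ℕ) : IsUnit (srcHom m n (x11src m n)) := by
  have h : srcHom m n (x11src m n) =
      algebraMap (R m n) (Rloc m n) (X (0, 0)) := by
    simp [srcHom, x11src, srcGen]
  rw [h]
  exact IsLocalization.Away.algebraMap_isUnit _

/-- The induced map `ℤ[Y][x₁₁, …, x_{m1}, x₁₂, …, x₁ₙ]_{x₁₁} → R_{x₁₁}`. -/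
def Φ (m n : ℕ) : Localization.Away (x11src m n) →+* Rloc m n :=
  Localization.awayLift (srcHom m n) (x11src m n) (srcHom_x11_isUnit m n)


lemma det_rowops {S : Type*} [CommRing S] {k : ℕ} (M : Matrix (Fin (k+1)) (Fin (k+1)) S)
    (u : Fin (k+1) → S) :
    (Matrix.of fun a b => M a b + (if a = 0 then 0 else u a * M 0 b)).det = M.det := by
  set E : Matrix (Fin (k+1)) (Fin (k+1)) S :=
    Matrix.of fun a b => (if a = b then (1:S) else 0) + (if b = 0 ∧ a ≠ 0 then u a else 0)
    with hEdef
  have hdetE : E.det = 1 := by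
    rw [Matrix.det_of_lowerTriangular E ?_]
    · simp [hEdef]
    · intro i j hij
      have hij' : i < j := hij
      have hj : j ≠ 0 := (lt_of_le_of_lt (Fin.zero_le i) hij').ne'
      simp [hEdef, hij'.ne, hj]
  have hEM : E * M = Matrix.of fun a b => M a b + (if a = 0 then 0 else u a * M 0 b) := by
    ext a b
    by_cases ha : a = 0 <;>
      simp [Matrix.mul_apply, hEdef, ha, add_mul, ite_mul, Finset.sum_add_distrib,
        Finset.sum_ite_eq, Finset.sum_ite_eq']
  rw [← hEM, Matrix.det_mul, hdetE, one_mul]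

variable {m n : ℕ}

local notation "A" => algebraMap (R m n) (Rloc m n)

lemma x11_mul_xinv : (algebraMap (R m n) (Rloc m n)) (X (0,0)) * xinv m n = 1 :=
  IsLocalization.Away.mul_invSelf _

/-- The matrix `Z` on the full index set, with zero first row and column. -/
def Zmat (m n : ℕ) : Matrix (Fin (m+1)) (Fin (n+1)) (Rloc m n) := fun i j =>
  algebraMap (R m n) (Rloc m n) (X (i, j)) -
    algebraMap (R m n) (Rloc m n) (X (i, 0)) *
      algebraMap (R m n) (Rloc m n) (X (0, j)) * xinv m n

lemma Zmat_zero_row (j : Fin (n+1)) : Zmat m n 0 j = 0 := by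
  have h := x11_mul_xinv (m := m) (n := n)
  simp only [Zmat]
  calc (A (X (0,j)) : Rloc m n) - A (X (0,0)) * A (X (0,j)) * xinv m n
      = A (X (0,j)) - A (X (0,j)) * (A (X (0,0)) * xinv m n) := by ring
    _ = 0 := by rw [h]; ring

lemma Zmat_zero_col (i : Fin (m+1)) : Zmat m n i 0 = 0 := by
  have h := x11_mul_xinv (m := m) (n := n)
  simp only [Zmat]
  calc (A (X (i,0)) : Rloc m n) - A (X (i,0)) * A (X (0,0)) * xinv m n
      = A (X (i,0)) - A (X (i,0)) * (A (X (0,0)) * xinv m n) := by ring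
    _ = 0 := by rw [h]; ring

lemma Zmat_succ_succ (i : Fin m) (j : Fin n) : Zmat m n i.succ j.succ = Ymat m n i j := rfl

/-- Row-reduction: a minor of `X` whose first row is row `0` has the same determinant as the
matrix with the same first row and the corresponding `Z`-rows below. -/
lemma minor_X_eq (k : ℕ) (ρ : Fin k → Fin (m+1)) (γ : Fin (k+1) → Fin (n+1)) :
    (Matrix.of fun a b => (algebraMap (R m n) (Rloc m n)) (X ((Fin.cons 0 ρ : Fin (k+1) → Fin (m+1)) a, γ b))).det
    = (Matrix.of fun (a : Fin (k+1)) b =>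
        Fin.cases ((algebraMap (R m n) (Rloc m n)) (X (0, γ b)))
          (fun a' => Zmat m n (ρ a') (γ b)) a).det := by
  rw [← det_rowops (M := Matrix.of fun (a : Fin (k+1)) b =>
        Fin.cases ((algebraMap (R m n) (Rloc m n)) (X (0, γ b)))
          (fun a' => Zmat m n (ρ a') (γ b)) a)
        (u := Fin.cases 0 (fun a' => (algebraMap (R m n) (Rloc m n)) (X (ρ a', 0)) * xinv m n))]
  congr 1
  ext a b
  refine Fin.cases ?_ (fun a' => ?_) a
  · simp
  · simp [Zmat, Fin.succ_ne_zero]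
    ring

lemma Kprime (k : ℕ) (ρ : Fin k → Fin (m+1)) (γ : Fin k → Fin (n+1)) :
    (Matrix.of fun a b => (algebraMap (R m n) (Rloc m n))
        (X ((Fin.cons 0 ρ : Fin (k+1) → Fin (m+1)) a, (Fin.cons 0 γ : Fin (k+1) → Fin (n+1)) b))).det
      = (algebraMap (R m n) (Rloc m n)) (X (0,0)) *
        (Matrix.of fun a b => Zmat m n (ρ a) (γ b)).det := by
  rw [minor_X_eq]
  rw [Matrix.det_succ_column_zero]
  rw [Finset.sum_eq_single (0 : Fin (k+1))]
  · simp only [Fin.val_zero, pow_zero, one_mul, Matrix.of_apply, Fin.cases_zero, Fin.cons_zero]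
    congr 1
  · intro i _ hi
    refine Fin.cases (fun h => absurd rfl h) (fun i' _ => ?_) i hi
    simp [Zmat_zero_col]
  · simp

lemma Zminor_mem (s : ℕ) (ρ : Fin s → Fin (m+1)) (γ : Fin s → Fin (n+1)) :
    (Matrix.of fun a b => Zmat m n (ρ a) (γ b)).det ∈ minorsIdeal s (Ymat m n) := by
  by_cases hr : ∃ a, ρ a = 0
  · obtain ⟨a, ha⟩ := hr
    rw [Matrix.det_eq_zero_of_row_eq_zero a (fun b => by simp [ha, Zmat_zero_row])]
    exact zero_mem _
  by_cases hc : ∃ b, γ b = 0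
  · obtain ⟨b, hb⟩ := hc
    rw [Matrix.det_eq_zero_of_column_eq_zero b (fun a => by simp [hb, Zmat_zero_col])]
    exact zero_mem _
  push_neg at hr hc
  refine Ideal.subset_span ⟨fun a => (ρ a).pred (hr a), fun b => (γ b).pred (hc b), ?_⟩
  congr 1
  ext a b
  rw [Matrix.of_apply, Matrix.of_apply, ← Zmat_succ_succ, Fin.succ_pred, Fin.succ_pred]

lemma Zminor_succ_mem (s : ℕ) (ρ : Fin (s+1) → Fin (m+1)) (γ : Fin (s+1) → Fin (n+1)) :
    (Matrix.of fun a b => Zmat m n (ρ a) (γ b)).det ∈ minorsIdeal s (Ymat m n) := by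
  rw [Matrix.det_succ_row_zero]
  refine Ideal.sum_mem _ fun j _ => ?_
  refine Ideal.mul_mem_left _ _ ?_
  have h := Zminor_mem s (fun a => ρ a.succ) (fun b => γ (j.succAbove b))
  convert h using 2
  ext a b; simp

lemma level1_mem (s : ℕ) (ρ : Fin s → Fin (m+1)) (γ : Fin (s+1) → Fin (n+1)) :
    (Matrix.of fun a b => (algebraMap (R m n) (Rloc m n))
        (X ((Fin.cons 0 ρ : Fin (s+1) → Fin (m+1)) a, γ b))).det
      ∈ minorsIdeal s (Ymat m n) := by
  rw [minor_X_eq, Matrix.det_succ_row_zero]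
  refine Ideal.sum_mem _ fun j _ => ?_
  refine Ideal.mul_mem_left _ _ ?_
  have h := Zminor_mem s ρ (fun b => γ (j.succAbove b))
  convert h using 2
  ext a b; simp

lemma Xminor_mem (s : ℕ) (r : Fin (s+1) → Fin (m+1)) (c : Fin (s+1) → Fin (n+1)) :
    (Matrix.of fun a b => (algebraMap (R m n) (Rloc m n)) (X (r a, c b))).det
      ∈ minorsIdeal s (Ymat m n) := by
  set J := minorsIdeal s (Ymat m n) with hJ
  set T := (Matrix.of fun a b => (algebraMap (R m n) (Rloc m n)) (X (r a, c b))).det with hT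
  set B := (Matrix.of fun a b => (algebraMap (R m n) (Rloc m n))
      (X ((Fin.cons 0 r : Fin (s+2) → Fin (m+1)) a,
          (Fin.cons 0 c : Fin (s+2) → Fin (n+1)) b))) with hBdef
  have hB : B.det ∈ J := by
    rw [hBdef, Kprime]
    exact Ideal.mul_mem_left _ _ (Zminor_succ_mem s r c)
  have key : B.det = (algebraMap (R m n) (Rloc m n)) (X (0,0)) * T +
      ∑ i : Fin (s+1), (-1 : Rloc m n)^(((i.succ : Fin (s+2)) : ℕ)) *
        (algebraMap (R m n) (Rloc m n)) (X (r i, 0)) *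
        (Matrix.of fun a b => (algebraMap (R m n) (Rloc m n))
          (X ((Fin.cons 0 (fun a' => r (i.succAbove a')) : Fin (s+1) → Fin (m+1)) a, c b))).det := by
    rw [Matrix.det_succ_column_zero, Fin.sum_univ_succ]
    congr 1
    · simp only [Fin.val_zero, pow_zero, one_mul, hBdef, Matrix.of_apply, Fin.cons_zero]
      congr 1
    · refine Finset.sum_congr rfl fun i _ => ?_
      congr 1
      congr 1
      ext a b
      refine Fin.cases ?_ (fun a' => ?_) a <;>
        simp [hBdef, Fin.succ_succAbove_succ, Fin.succ_succAbove_zero]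
  have hsum : (∑ i : Fin (s+1), (-1 : Rloc m n)^(((i.succ : Fin (s+2)) : ℕ)) *
        (algebraMap (R m n) (Rloc m n)) (X (r i, 0)) *
        (Matrix.of fun a b => (algebraMap (R m n) (Rloc m n))
          (X ((Fin.cons 0 (fun a' => r (i.succAbove a')) : Fin (s+1) → Fin (m+1)) a, c b))).det) ∈ J :=
    Ideal.sum_mem _ fun i _ => Ideal.mul_mem_left _ _ (level1_mem s (fun a' => r (i.succAbove a')) c)
  have hx : (algebraMap (R m n) (Rloc m n)) (X (0,0)) * T ∈ J := by
    have h2 : (algebraMap (R m n) (Rloc m n)) (X (0,0)) * T = B.det - _ := eq_sub_of_add_eq key.symm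
    rw [h2]
    exact J.sub_mem hB hsum
  have hTeq : T = xinv m n * ((algebraMap (R m n) (Rloc m n)) (X (0,0)) * T) := by
    rw [← mul_assoc, mul_comm (xinv m n), x11_mul_xinv, one_mul]
  rw [hTeq]
  exact Ideal.mul_mem_left _ _ hx

lemma ideal_eq (s : ℕ) :
    Ideal.map (algebraMap (R m n) (Rloc m n)) (minorsIdeal (s+1) (Xmat m n)) =
      minorsIdeal s (Ymat m n) := by
  apply le_antisymm
  · rw [Ideal.map_le_iff_le_comap, minorsIdeal, Ideal.span_le]
    rintro d ⟨r, c, rfl⟩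
    simp only [SetLike.mem_coe, Ideal.mem_comap]
    have : (algebraMap (R m n) (Rloc m n)) (Matrix.of fun a b => Xmat m n (r a) (c b)).det
        = (Matrix.of fun a b => (algebraMap (R m n) (Rloc m n)) (X (r a, c b))).det := by
      rw [RingHom.map_det]
      congr 1
    rw [this]
    exact Xminor_mem s r c
  · rw [minorsIdeal, Ideal.span_le]
    rintro d ⟨r, c, rfl⟩
    simp only [SetLike.mem_coe]
    have hK := Kprime (m := m) (n := n) s (fun a => (r a).succ) (fun b => (c b).succ)
    have hZY : (Matrix.of fun a b => Zmat m n ((r a).succ) ((c b).succ)) =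
        (Matrix.of fun a b => Ymat m n (r a) (c b)) := rfl
    rw [hZY] at hK
    have hdet : (Matrix.of fun a b => (algebraMap (R m n) (Rloc m n))
        (X ((Fin.cons 0 (fun a => (r a).succ) : Fin (s+1) → Fin (m+1)) a,
            (Fin.cons 0 (fun b => (c b).succ) : Fin (s+1) → Fin (n+1)) b))).det
        = (algebraMap (R m n) (Rloc m n)) ((Matrix.of fun a b => Xmat m n
            ((Fin.cons 0 (fun a => (r a).succ) : Fin (s+1) → Fin (m+1)) a)
            ((Fin.cons 0 (fun b => (c b).succ) : Fin (s+1) → Fin (n+1)) b)).det) := by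
      rw [RingHom.map_det]
      congr 1
    have hmem : (Matrix.of fun a b => Xmat m n
            ((Fin.cons 0 (fun a => (r a).succ) : Fin (s+1) → Fin (m+1)) a)
            ((Fin.cons 0 (fun b => (c b).succ) : Fin (s+1) → Fin (n+1)) b)).det
        ∈ minorsIdeal (s+1) (Xmat m n) :=
      Ideal.subset_span ⟨_, _, rfl⟩
    have hT : (Matrix.of fun a b => Ymat m n (r a) (c b)).det =
        xinv m n * ((algebraMap (R m n) (Rloc m n)) (X (0,0)) *
          (Matrix.of fun a b => Ymat m n (r a) (c b)).det) := by
      rw [← mul_assoc, mul_comm (xinv m n), x11_mul_xinv, one_mul]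
    rw [hT, ← hK, hdet]
    exact Ideal.mul_mem_left _ _ (Ideal.mem_map_of_mem _ hmem)



section Inverse

/-- The source polynomial ring. -/
abbrev Src (m n : ℕ) := MvPolynomial ((Fin m × Fin n) ⊕ (Fin (m + 1) ⊕ Fin n)) ℤ

/-- Images of the matrix variables under the inverse map. -/
def invGen (m n : ℕ) : Fin (m+1) × Fin (n+1) → Localization.Away (x11src m n) := fun p =>
  Fin.cases
    (Fin.cases
      (algebraMap (Src m n) (Localization.Away (x11src m n)) (X (Sum.inr (Sum.inl 0))))
      (fun j' => algebraMap (Src m n) (Localization.Away (x11src m n))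
        (X (Sum.inr (Sum.inr j')))) p.2)
    (fun i' => Fin.cases
      (algebraMap (Src m n) (Localization.Away (x11src m n)) (X (Sum.inr (Sum.inl i'.succ))))
      (fun j' => algebraMap (Src m n) (Localization.Away (x11src m n)) (X (Sum.inl (i', j'))) +
        algebraMap (Src m n) (Localization.Away (x11src m n)) (X (Sum.inr (Sum.inl i'.succ))) *
          algebraMap (Src m n) (Localization.Away (x11src m n)) (X (Sum.inr (Sum.inr j'))) *
          IsLocalization.Away.invSelf (x11src m n)) p.2)
    p.1

/-- The ring homomorphism `R → (source)_{x₁₁}`. -/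
def psiHom (m n : ℕ) : R m n →+* Localization.Away (x11src m n) :=
  (MvPolynomial.aeval (invGen m n)).toRingHom

lemma psiHom_x11_isUnit (m n : ℕ) : IsUnit (psiHom m n (X (0,0))) := by
  have h : psiHom m n (X (0,0)) =
      algebraMap (Src m n) (Localization.Away (x11src m n)) (x11src m n) := by
    show MvPolynomial.aeval (invGen m n) (X (0,0)) = _
    rw [aeval_X]
    exact (by simp [invGen] : invGen m n (0,0) = algebraMap (Src m n)
      (Localization.Away (x11src m n)) (X (Sum.inr (Sum.inl 0))))
  rw [h]
  exact IsLocalization.Away.algebraMap_isUnit _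

/-- The inverse homomorphism `R_{x₁₁} → (source)_{x₁₁}`. -/
def Ψmap (m n : ℕ) : Rloc m n →+* Localization.Away (x11src m n) :=
  Localization.awayLift (psiHom m n) _ (psiHom_x11_isUnit m n)

lemma inv_unique {S : Type*} [CommRing S] {a b c : S} (hb : a * b = 1) (hc : a * c = 1) :
    b = c := by
  calc b = b * (a * c) := by rw [hc, mul_one]
    _ = c * (a * b) := by ring
    _ = c := by rw [hb, mul_one]

lemma Phi_algebraMap (m n : ℕ) (p : Src m n) :
    Φ m n (algebraMap (Src m n) (Localization.Away (x11src m n)) p) = srcHom m n p :=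
  IsLocalization.Away.lift_eq _ (srcHom_x11_isUnit m n) _

lemma Psi_algebraMap (m n : ℕ) (p : R m n) :
    Ψmap m n (algebraMap (R m n) (Rloc m n) p) = psiHom m n p :=
  IsLocalization.Away.lift_eq _ (psiHom_x11_isUnit m n) _

lemma Phi_invSelf (m n : ℕ) :
    Φ m n (IsLocalization.Away.invSelf (x11src m n)) = xinv m n := by
  have h1 : algebraMap (Src m n) (Localization.Away (x11src m n)) (x11src m n) *
      IsLocalization.Away.invSelf (x11src m n) = 1 := IsLocalization.Away.mul_invSelf _
  have h2 := congrArg (Φ m n) h1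
  rw [map_mul, map_one, Phi_algebraMap] at h2
  have h3 : srcHom m n (x11src m n) = algebraMap (R m n) (Rloc m n) (X (0,0)) := by
    simp [srcHom, x11src, srcGen]
  rw [h3] at h2
  exact inv_unique h2 (x11_mul_xinv (m := m) (n := n))

lemma Psi_xinv (m n : ℕ) :
    Ψmap m n (xinv m n) = IsLocalization.Away.invSelf (x11src m n) := by
  have h1 := congrArg (Ψmap m n) (x11_mul_xinv (m := m) (n := n))
  rw [map_mul, map_one, Psi_algebraMap] at h1
  have h3 : psiHom m n (X (0,0)) =
      algebraMap (Src m n) (Localization.Away (x11src m n)) (x11src m n) := by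
    show MvPolynomial.aeval (invGen m n) (X (0,0)) = _
    rw [aeval_X]
    exact (by simp [invGen] : invGen m n (0,0) = algebraMap (Src m n)
      (Localization.Away (x11src m n)) (X (Sum.inr (Sum.inl 0))))
  rw [h3] at h1
  exact inv_unique h1 (IsLocalization.Away.mul_invSelf _)

end Inverse


set_option maxHeartbeats 1000000
set_option synthInstance.maxHeartbeats 200000

lemma Phi_comp_Psi (m n : ℕ) : (Φ m n).comp (Ψmap m n) = RingHom.id (Rloc m n) := by
  apply IsLocalization.ringHom_ext (Submonoid.powers (X (0,0) : R m n))
  apply MvPolynomial.ringHom_ext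
  · intro r
    simp only [RingHom.coe_comp, Function.comp_apply, eq_intCast, map_intCast]
  · intro p
    simp only [RingHom.coe_comp, Function.comp_apply, RingHom.id_apply]
    rw [Psi_algebraMap]
    have hps : psiHom m n (X p) = invGen m n p := by simp [psiHom]
    rw [hps]
    obtain ⟨i, j⟩ := p
    refine Fin.cases ?_ (fun i' => ?_) i <;> refine Fin.cases ?_ (fun j' => ?_) j
    · have hred : invGen m n (0, 0) = algebraMap (Src m n) (Localization.Away (x11src m n))
          (X (Sum.inr (Sum.inl 0))) := by simp [invGen]
      rw [hred, Phi_algebraMap]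
      simp [srcHom, srcGen]
    · simp [invGen, Phi_algebraMap, srcHom, srcGen]
    · simp [invGen, Phi_algebraMap, srcHom, srcGen]
    · have hred : invGen m n (i'.succ, j'.succ) =
          algebraMap (Src m n) (Localization.Away (x11src m n)) (X (Sum.inl (i', j'))) +
          algebraMap (Src m n) (Localization.Away (x11src m n)) (X (Sum.inr (Sum.inl i'.succ))) *
            algebraMap (Src m n) (Localization.Away (x11src m n)) (X (Sum.inr (Sum.inr j'))) *
            IsLocalization.Away.invSelf (x11src m n) := by
        simp [invGen]
      rw [hred, map_add, map_mul, map_mul, Phi_algebraMap, Phi_algebraMap, Phi_algebraMap,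
        Phi_invSelf]
      have e1 : srcHom m n (X (Sum.inl (i', j'))) = Ymat m n i' j' := by simp [srcHom, srcGen]
      have e2 : srcHom m n (X (Sum.inr (Sum.inl i'.succ))) =
          algebraMap (R m n) (Rloc m n) (X (i'.succ, 0)) := by simp [srcHom, srcGen]
      have e3 : srcHom m n (X (Sum.inr (Sum.inr j'))) =
          algebraMap (R m n) (Rloc m n) (X (0, j'.succ)) := by simp [srcHom, srcGen]
      rw [e1, e2, e3, Ymat]
      ring

lemma Psi_comp_Phi (m n : ℕ) :
    (Ψmap m n).comp (Φ m n) = RingHom.id (Localization.Away (x11src m n)) := by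
  apply IsLocalization.ringHom_ext (Submonoid.powers (x11src m n))
  apply MvPolynomial.ringHom_ext
  · intro r
    simp only [RingHom.coe_comp, Function.comp_apply, eq_intCast, map_intCast]
  · intro σ
    simp only [RingHom.coe_comp, Function.comp_apply, RingHom.id_apply]
    rw [Phi_algebraMap]
    have hsr : srcHom m n (X σ) = srcGen m n σ := by simp [srcHom]
    rw [hsr]
    rcases σ with ⟨i, j⟩ | i | j
    · simp only [srcGen, Ymat, map_sub, map_mul, Psi_algebraMap, Psi_xinv]
      have h1 : psiHom m n (X (i.succ, j.succ)) = invGen m n (i.succ, j.succ) := by simp [psiHom]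
      have h2 : psiHom m n (X (i.succ, 0)) = invGen m n (i.succ, 0) := by simp [psiHom]
      have h3 : psiHom m n (X (0, j.succ)) = invGen m n (0, j.succ) := by simp [psiHom]
      rw [h1, h2, h3]
      simp [invGen]
    · have h2 : psiHom m n (X (i, 0)) = invGen m n (i, 0) := by simp [psiHom]
      simp only [srcGen, Psi_algebraMap, h2]
      refine Fin.cases ?_ (fun i' => ?_) i <;> simp [invGen]
    · have h3 : psiHom m n (X (0, j.succ)) = invGen m n (0, j.succ) := by simp [psiHom]
      simp only [srcGen, Psi_algebraMap, h3]
      simp [invGen]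

/-- Lemma 4.1: the map `ℤ[Y][x₁₁, …, x_{m1}, x₁₂, …, x₁ₙ]_{x₁₁} → R_{x₁₁}` sending
`y_{ij} ↦ x_{ij} - x_{i1}x_{1j}/x_{11}` (and the first-row/first-column variables to
themselves) is a ring isomorphism, and under it the extended ideal `I_t(X)R_{x₁₁}` of
size-`t` minors of `X` equals the ideal `I_{t-1}(Y)R_{x₁₁}` of size-`(t-1)` minors
of `Y`. -/
theorem invert_entry (m n t : ℕ) (ht : 1 ≤ t) (htm : t ≤ m + 1) (htn : t ≤ n + 1) :
    Function.Bijective (Φ m n) ∧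
    Ideal.map (algebraMap (R m n) (Rloc m n)) (minorsIdeal t (Xmat m n)) =
      minorsIdeal (t - 1) (Ymat m n) := by
  obtain ⟨s, rfl⟩ : ∃ s, t = s + 1 := ⟨t - 1, (Nat.succ_pred_eq_of_pos ht).symm⟩
  constructor
  · exact Function.bijective_iff_has_inverse.mpr
      ⟨Ψmap m n, fun x => RingHom.congr_fun (Psi_comp_Phi m n) x,
        fun x => RingHom.congr_fun (Phi_comp_Psi m n) x⟩
  · simpa using ideal_eq (m := m) (n := n) s

end Stmt18

end Stmt18
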